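/- Let n ≥ 1 and E : Fin n → ℝ be positive and nonincreasing. Define f(p) = ∑_k p_k E_k - (1/2)·max_k p_k E_k on the probability simplex I = {p ∈ ℝ^n : p_k ≥ 0, ∑ p_k = 1}. Let S_k = ∑_{j=1}^k 1/E_j and r the smallest index maximizing (k - 1/2)/S_k. Then the vector p* with p*_k = 1/(E_k S_r) for k ≤ r and p*_k = 0 for k > r lies in I and maximizes f over I. -/

import Mathlib

open Finset

lemma key_bound {n : ℕ} (E S q : Fin n → ℝ) (hEpos : ∀ k, 0 < E k)
    (hS : ∀ k, S k = ∑ j ∈ Finset.Iic k, 1 / E j)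
    (hq1 : ∑ k, q k = 1) (M : ℝ)
    (hM : ∀ k, q k * E k ≤ M) (hq0 : ∀ k, 0 ≤ q k)
    (m : Fin n) (c : ℝ) (hc : 0 ≤ c)
    (hhead : ∀ k, k ≤ m → c ≤ E k)
    (htail : ∀ k, m < k → E k ≤ c) :
    ∑ k, q k * E k ≤ c + M * (m.val + 1) - M * c * S m := by
  have hfil : Finset.univ.filter (fun k : Fin n => k ≤ m) = Finset.Iic m := by
    ext k; simp
  have hsplit := Finset.sum_filter_add_sum_filter_not Finset.univ (fun k : Fin n => k ≤ m)
    (fun k => q k * E k)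
  have hsplitq := Finset.sum_filter_add_sum_filter_not Finset.univ (fun k : Fin n => k ≤ m)
    (fun k => q k)
  set A := ∑ k ∈ Finset.univ.filter (fun k : Fin n => k ≤ m), q k with hA
  -- tail bound
  have htailb : ∑ k ∈ Finset.univ.filter (fun k : Fin n => ¬ k ≤ m), q k * E k
      ≤ (1 - A) * c := by
    have h1 : ∑ k ∈ Finset.univ.filter (fun k : Fin n => ¬ k ≤ m), q k * E k
        ≤ ∑ k ∈ Finset.univ.filter (fun k : Fin n => ¬ k ≤ m), q k * c := by
      apply Finset.sum_le_sum
      intro k hk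
      simp only [Finset.mem_filter] at hk
      exact mul_le_mul_of_nonneg_left (htail k (lt_of_not_ge hk.2)) (hq0 k)
    have h2 : ∑ k ∈ Finset.univ.filter (fun k : Fin n => ¬ k ≤ m), q k = 1 - A := by
      rw [hq1] at hsplitq; linarith
    calc _ ≤ _ := h1
    _ = (∑ k ∈ Finset.univ.filter (fun k : Fin n => ¬ k ≤ m), q k) * c := by
        rw [Finset.sum_mul]
    _ = (1 - A) * c := by rw [h2]
  -- head bound
  have hheadb : ∑ k ∈ Finset.univ.filter (fun k : Fin n => k ≤ m), q k * E k
      ≤ A * c + M * (m.val + 1) - M * c * S m := by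
    have h1 : ∀ k ∈ Finset.univ.filter (fun k : Fin n => k ≤ m),
        q k * E k ≤ q k * c + (M - M * c / E k) := by
      intro k hk
      simp only [Finset.mem_filter] at hk
      have hEk := hEpos k
      have hqk : q k ≤ M / E k := by
        rw [le_div_iff₀ hEk]; exact hM k
      have hce : c ≤ E k := hhead k hk.2
      have : q k * (E k - c) ≤ (M / E k) * (E k - c) :=
        mul_le_mul_of_nonneg_right hqk (by linarith)
      have hne : E k ≠ 0 := ne_of_gt hEk
      have heq : (M / E k) * (E k - c) = M - M * c / E k := by
        field_simp
      nlinarith [this, heq]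
    calc ∑ k ∈ Finset.univ.filter (fun k : Fin n => k ≤ m), q k * E k
        ≤ ∑ k ∈ Finset.univ.filter (fun k : Fin n => k ≤ m),
            (q k * c + (M - M * c / E k)) := Finset.sum_le_sum h1
      _ = A * c + M * (m.val + 1) - M * c * S m := by
          rw [Finset.sum_add_distrib, Finset.sum_sub_distrib, ← Finset.sum_mul]
          rw [Finset.sum_const, hfil, Fin.card_Iic]
          have : ∑ k ∈ Finset.Iic m, M * c / E k = M * c * S m := by
            rw [hS m, Finset.mul_sum]
            apply Finset.sum_congr rfl
            intro k _
            field_simp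
          rw [hfil] at hA
          rw [this, ← hA, nsmul_eq_mul]
          push_cast
          ring
  calc ∑ k, q k * E k
      = (∑ k ∈ Finset.univ.filter (fun k : Fin n => k ≤ m), q k * E k)
        + ∑ k ∈ Finset.univ.filter (fun k : Fin n => ¬ k ≤ m), q k * E k := hsplit.symm
    _ ≤ (A * c + M * (m.val + 1) - M * c * S m) + (1 - A) * c := by
        exact add_le_add hheadb htailb
    _ = c + M * (m.val + 1) - M * c * S m := by ring

/-- The explicit vector p* solves the worst-case utility problem (P2) when a=b=d=0. -/
theorem stmt3 (n : ℕ) (hn : 0 < n) (E : Fin n → ℝ)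
    (hEpos : ∀ k, 0 < E k)
    (hEmono : ∀ k l : Fin n, k ≤ l → E l ≤ E k)
    (S : Fin n → ℝ) (hS : ∀ k, S k = ∑ j ∈ Finset.Iic k, 1 / E j)
    (φ : Fin n → ℝ) (hφ : ∀ k, φ k = (((k.val : ℝ) + 1) - 1/2) / S k)
    (r : Fin n) (hr_max : ∀ k, φ k ≤ φ r)
    (hr_min : ∀ k, φ k = φ r → r ≤ k)
    (p : Fin n → ℝ)
    (hp : ∀ k, p k = if k ≤ r then 1 / (E k * S r) else 0) :
    ((∀ k, 0 ≤ p k) ∧ ∑ k, p k = 1) ∧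
    (∀ q : Fin n → ℝ, (∀ k, 0 ≤ q k) → ∑ k, q k = 1 →
      (∑ k, q k * E k) -
          (1/2) * Finset.univ.sup' ⟨⟨0, hn⟩, Finset.mem_univ _⟩ (fun k => q k * E k)
        ≤ (∑ k, p k * E k) -
          (1/2) * Finset.univ.sup' ⟨⟨0, hn⟩, Finset.mem_univ _⟩ (fun k => p k * E k)) := by
  -- basic facts about S
  have hSpos : ∀ k, 0 < S k := by
    intro k
    rw [hS k]
    apply Finset.sum_pos
    · intro j _; exact one_div_pos.mpr (hEpos j)
    · exact ⟨k, Finset.mem_Iic.mpr le_rfl⟩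
  have hSmono : ∀ k l : Fin n, k ≤ l → S k ≤ S l := by
    intro k l hkl
    rw [hS k, hS l]
    apply Finset.sum_le_sum_of_subset_of_nonneg
    · exact Finset.Iic_subset_Iic.mpr hkl
    · intro j _ _; exact (one_div_pos.mpr (hEpos j)).le
  have hfil : ∀ m : Fin n, Finset.univ.filter (fun k : Fin n => k ≤ m) = Finset.Iic m := by
    intro m; ext k; simp
  have hval : ∀ k, p k * E k = if k ≤ r then 1 / S r else 0 := by
    intro k
    rw [hp k]
    split
    · have h1 := hEpos k
      have h2 := hSpos r
      field_simp
    · ring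
  have hpsum : ∑ k, p k = 1 := by
    have h1 : ∑ k, p k = ∑ k ∈ Finset.Iic r, 1 / (E k * S r) := by
      rw [← hfil r, Finset.sum_filter]
      apply Finset.sum_congr rfl
      intro k _
      rw [hp k]
    rw [h1]
    have h2 : ∑ k ∈ Finset.Iic r, 1 / (E k * S r) = (∑ k ∈ Finset.Iic r, 1 / E k) * (1 / S r) := by
      rw [Finset.sum_mul]
      apply Finset.sum_congr rfl
      intro k _
      rw [one_div_mul_eq_div, div_div]
      ring_nf
    rw [h2, ← hS r, mul_one_div, div_self (ne_of_gt (hSpos r))]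
  have hppos : ∀ k, 0 ≤ p k := by
    intro k
    rw [hp k]
    split
    · have h1 := hEpos k
      have h2 := hSpos r
      positivity
    · exact le_rfl
  -- value of f at p
  have hzero_le : (⟨0, hn⟩ : Fin n) ≤ r := by
    exact Fin.mk_le_of_le_val (Nat.zero_le _)
  have hsup_p : Finset.univ.sup' ⟨⟨0, hn⟩, Finset.mem_univ _⟩ (fun k => p k * E k) = 1 / S r := by
    apply le_antisymm
    · apply Finset.sup'_le
      intro k _
      rw [hval k]
      split
      · exact le_rfl
      · exact (one_div_pos.mpr (hSpos r)).le
    · calc 1 / S r = p ⟨0, hn⟩ * E ⟨0, hn⟩ := by rw [hval, if_pos hzero_le]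
        _ ≤ _ := Finset.le_sup' (fun k => p k * E k) (Finset.mem_univ (⟨0, hn⟩ : Fin n))
  have hpE : ∑ k, p k * E k = ((r.val : ℝ) + 1) / S r := by
    have h1 : ∑ k, p k * E k = ∑ _k ∈ Finset.univ.filter (fun k : Fin n => k ≤ r), (1 / S r) := by
      rw [Finset.sum_filter]
      apply Finset.sum_congr rfl
      intro k _
      rw [hval k]
    rw [h1, Finset.sum_const, hfil r, Fin.card_Iic, nsmul_eq_mul]
    push_cast
    ring
  have hfp : (∑ k, p k * E k) -
      (1/2) * Finset.univ.sup' ⟨⟨0, hn⟩, Finset.mem_univ _⟩ (fun k => p k * E k) = φ r := by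
    rw [hpE, hsup_p, hφ r]
    ring
  refine ⟨⟨hppos, hpsum⟩, ?_⟩
  intro q hq0 hq1
  rw [hfp]
  -- now bound f q by φ r
  set M := Finset.univ.sup' ⟨⟨0, hn⟩, Finset.mem_univ _⟩ (fun k => q k * E k) with hMdef
  have hM : ∀ k, q k * E k ≤ M := fun k => Finset.le_sup' (fun k => q k * E k) (Finset.mem_univ k)
  have hq_le_one : ∀ k, q k ≤ 1 := by
    intro k
    calc q k ≤ ∑ j, q j := Finset.single_le_sum (fun j _ => hq0 j) (Finset.mem_univ k)
    _ = 1 := hq1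
  have hMpos : 0 < M := by
    by_contra h
    push_neg at h
    have : ∀ k, q k = 0 := by
      intro k
      have h1 := hM k
      have h2 := hEpos k
      have h3 := hq0 k
      nlinarith
    have : ∑ k, q k = 0 := Finset.sum_eq_zero (fun k _ => this k)
    rw [hq1] at this
    norm_num at this
  -- M * S 0 ≤ 1
  have hE0 : ∀ k, E k ≤ E ⟨0, hn⟩ := by
    intro k
    exact hEmono ⟨0, hn⟩ k (Fin.mk_le_of_le_val (Nat.zero_le _))
  have hMS0 : M * S ⟨0, hn⟩ ≤ 1 := by
    have hSval : S ⟨0, hn⟩ = 1 / E ⟨0, hn⟩ := by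
      rw [hS]
      have : Finset.Iic (⟨0, hn⟩ : Fin n) = {⟨0, hn⟩} := by
        ext k
        simp [Fin.le_def, Fin.ext_iff]
      rw [this, Finset.sum_singleton]
    have hMle : M ≤ E ⟨0, hn⟩ := by
      apply Finset.sup'_le
      intro k _
      calc q k * E k ≤ 1 * E k := by
            apply mul_le_mul_of_nonneg_right (hq_le_one k) (le_of_lt (hEpos k))
      _ = E k := one_mul _
      _ ≤ E ⟨0, hn⟩ := hE0 k
    rw [hSval]
    rw [mul_one_div, div_le_one (hEpos _)]
    exact hMle
  -- the set of indices with M * S k ≤ 1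
  set t := Finset.univ.filter (fun k : Fin n => M * S k ≤ 1) with ht
  have ht_ne : t.Nonempty := ⟨⟨0, hn⟩, by simp [ht, hMS0]⟩
  set m := t.max' ht_ne with hm
  have hm_mem : M * S m ≤ 1 := by
    have := t.max'_mem ht_ne
    simp [ht] at this
    exact this
  have hm_max : ∀ k, M * S k ≤ 1 → k ≤ m := by
    intro k hk
    exact t.le_max' k (by simp [ht, hk])
  -- key final bound: f q ≤ φ r
  have hfinal : (∑ k, q k * E k) - (1/2) * M ≤ φ r := by
    by_cases hcase : ∀ k : Fin n, M * S k ≤ 1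
    · -- case 1: all indices satisfy the bound; use m = last with c = 0
      set L : Fin n := ⟨n - 1, by omega⟩ with hL
      have hLtop : ∀ k : Fin n, k ≤ L := by
        intro k
        have hk := k.isLt
        exact Fin.le_def.mpr (by simp only [hL]; omega)
      have hkey := key_bound E S q hEpos hS hq1 M hM hq0 L 0 le_rfl
        (fun k _ => le_of_lt (hEpos k)) (fun k hk => absurd (hLtop k) (not_le.mpr hk))
      have hbound : (∑ k, q k * E k) - (1/2) * M ≤ M * ((L.val : ℝ) + 1 - 1/2) := by
        have := hkey
        nlinarith
      have hML : M ≤ 1 / S L := by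
        rw [le_div_iff₀ (hSpos L)]
        linarith [hcase L]
      calc (∑ k, q k * E k) - (1/2) * M ≤ M * ((L.val : ℝ) + 1 - 1/2) := hbound
        _ ≤ (1 / S L) * ((L.val : ℝ) + 1 - 1/2) := by
            apply mul_le_mul_of_nonneg_right hML
            have h0 : (0:ℝ) ≤ (L.val : ℝ) := Nat.cast_nonneg _
            linarith
        _ = φ L := by rw [hφ L]; ring
        _ ≤ φ r := hr_max L
    · -- case 2: m < last, m' = m+1 violates
      push_neg at hcase
      obtain ⟨k₀, hk₀⟩ := hcase
      have hmlt : m.val + 1 < n := by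
        by_contra h
        push_neg at h
        have hk₀m : k₀ ≤ m := by
          have : k₀.val ≤ m.val := by omega
          exact this
        have : S k₀ ≤ S m := hSmono _ _ hk₀m
        nlinarith [hm_mem, hMpos]
      set m' : Fin n := ⟨m.val + 1, hmlt⟩ with hm'
      have hmm' : m < m' := by
        rw [Fin.lt_def, hm']; exact Nat.lt_succ_self _
      have hm'_not : ¬ M * S m' ≤ 1 := by
        intro h
        exact absurd (hm_max m' h) (not_le.mpr hmm')
      push_neg at hm'_not
      -- S m' = S m + 1 / E m'
      have hSm' : S m' = S m + 1 / E m' := by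
        rw [hS m', hS m]
        have : Finset.Iic m' = insert m' (Finset.Iic m) := by
          ext k
          simp only [Finset.mem_Iic, Finset.mem_insert]
          constructor
          · intro h
            rcases eq_or_lt_of_le h with h | h
            · left; exact Fin.ext (Fin.val_eq_of_eq h)
            · right
              have : k.val < m.val + 1 := h
              exact Fin.mk_le_of_le_val (by omega)
          · rintro (rfl | h)
            · exact le_rfl
            · exact le_of_lt (lt_of_le_of_lt h hmm')
        rw [this, Finset.sum_insert (by simpa using hmm')]
        ring
      have hkey := key_bound E S q hEpos hS hq1 M hM hq0 m (E m') (le_of_lt (hEpos m'))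
        (fun k hk => hEmono k m' (le_of_lt (lt_of_le_of_lt hk hmm')))
        (fun k hk => hEmono m' k hk)
      -- f q ≤ a * M + b
      set a : ℝ := ((m.val : ℝ) + 1 - 1/2) - E m' * S m with ha
      set b : ℝ := E m' with hb
      have hlin : (∑ k, q k * E k) - (1/2) * M ≤ a * M + b := by
        rw [ha, hb]
        nlinarith [hkey]
      have hSm := hSpos m
      have hSm'pos := hSpos m'
      have hEm' := hEpos m'
      rcases le_or_gt 0 a with hapos | haneg
      · have hMle : M ≤ 1 / S m := by
          rw [le_div_iff₀ hSm]; linarith [hm_mem]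
        have : a * M + b ≤ a * (1 / S m) + b :=
          add_le_add_left (mul_le_mul_of_nonneg_left hMle hapos) b
        have hφm : a * (1 / S m) + b = φ m := by
          rw [hφ m, ha, hb]
          field_simp
          ring
        calc (∑ k, q k * E k) - (1/2) * M ≤ a * M + b := hlin
          _ ≤ a * (1 / S m) + b := this
          _ = φ m := hφm
          _ ≤ φ r := hr_max m
      · have hMge : 1 / S m' ≤ M := by
          rw [div_le_iff₀ hSm'pos]; linarith [hm'_not]
        have : a * M + b ≤ a * (1 / S m') + b := by
          apply add_le_add_left
          exact mul_le_mul_of_nonpos_left hMge (le_of_lt haneg)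
        have hφm' : a * (1 / S m') + b = φ m' := by
          rw [hφ m', ha, hSm', hb]
          have hEm'ne : E m' ≠ 0 := ne_of_gt hEm'
          have hSm'ne : S m + 1 / E m' ≠ 0 := by
            rw [← hSm']; exact ne_of_gt hSm'pos
          have : (m'.val : ℝ) = (m.val : ℝ) + 1 := by simp [hm']
          rw [this]
          field_simp
          ring
        calc (∑ k, q k * E k) - (1/2) * M ≤ a * M + b := hlin
          _ ≤ a * (1 / S m') + b := this
          _ = φ m' := hφm'
          _ ≤ φ r := hr_max m'
  exact hfinal
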